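/- Let e = (1,2,1,1,1) ∈ ℤ^5, so that Q_7(e) = 0, and let M = {x ∈ ℤ^5 : B_7(x, e) = 0}. Then the subgroup of M generated by e together with all roots of M (i.e., all r ∈ M with Q_7(r) > 0 such that Q_7(r) divides 2·B_7(r, x) for every x ∈ M) is a proper subgroup of M. -/

import Mathlib

/-- The bilinear form `B_p(x,y) = -p·x_0·y_0 + x_1·y_1 + … + x_n·y_n` on `ℤ^{n+1}`. -/
def Bform (p : ℤ) {n : ℕ} (x y : Fin (n + 1) → ℤ) : ℤ :=
  -p * x 0 * y 0 + ∑ i ∈ Finset.univ.filter (fun i : Fin (n + 1) => i ≠ 0), x i * y i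

/-- The quadratic form `Q_p(x) = B_p(x,x)`. -/
def Qform (p : ℤ) {n : ℕ} (x : Fin (n + 1) → ℤ) : ℤ := Bform p x x

/-- The primitive null vector `e`. -/
def eVec : Fin 5 → ℤ := ![1, 2, 1, 1, 1]

lemma Bform_apply (x y : Fin 5 → ℤ) :
    Bform 7 x y = -7 * x 0 * y 0 + x 1 * y 1 + x 2 * y 2 + x 3 * y 3 + x 4 * y 4 := by
  rw [Bform, Finset.sum_filter, Fin.sum_univ_five]
  norm_num [if_neg (show ¬((1:Fin 5) = 0) from by decide),
    if_neg (show ¬((2:Fin 5) = 0) from by decide), if_neg (show ¬((3:Fin 5) = 0) from by decide),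
    if_neg (show ¬((4:Fin 5) = 0) from by decide)]
  ring

lemma Bform_eVec (x : Fin 5 → ℤ) :
    Bform 7 x eVec = -7 * x 0 + 2 * x 1 + x 2 + x 3 + x 4 := by
  rw [Bform_apply]
  norm_num [show eVec 0 = 1 from rfl, show eVec 1 = 2 from rfl, show eVec 2 = 1 from rfl,
    show eVec 3 = 1 from rfl, show eVec 4 = 1 from rfl]
  ring

lemma Qform_apply (x : Fin 5 → ℤ) :
    Qform 7 x = -7 * x 0 ^ 2 + x 1 ^ 2 + x 2 ^ 2 + x 3 ^ 2 + x 4 ^ 2 := by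
  rw [Qform, Bform_apply]; ring

lemma one_le_sq {x : ℤ} (h : x ≠ 0) : 1 ≤ x ^ 2 := by
  nlinarith [Int.one_le_abs h, sq_abs x, abs_nonneg x]

lemma sq_eq_self_add_two_mul (x : ℤ) : ∃ k, x ^ 2 = x + 2 * k := by
  rcases Int.even_or_odd x with ⟨m, hm⟩ | ⟨m, hm⟩
  · exact ⟨2 * m ^ 2 - m, by subst hm; ring⟩
  · exact ⟨2 * m ^ 2 + m, by subst hm; ring⟩

lemma four_sq_ne_one (a b c d : ℤ) (h : a ^ 2 + b ^ 2 + c ^ 2 + d ^ 2 = 1)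
    (h2 : 2 * a = b + c + d) : False := by
  have hb : (b + c + d) ^ 2 ≤ 3 * (b ^ 2 + c ^ 2 + d ^ 2) := by
    nlinarith [sq_nonneg (b - c), sq_nonneg (b - d), sq_nonneg (c - d)]
  have h2sq : (b + c + d) ^ 2 = 4 * a ^ 2 := by rw [← h2]; ring
  have h5 : 4 * a ^ 2 ≤ 3 * (b ^ 2 + c ^ 2 + d ^ 2) := by linarith [hb, h2sq]
  have ha : a = 0 := by
    by_contra h0
    have := one_le_sq h0
    nlinarith
  subst ha
  have h3 : b + c + d = 0 := by linarith
  have h4 : (b + c + d) ^ 2 = 0 := by rw [h3]; ring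
  have h6 : (1 : ℤ) = -2 * (b * c + b * d + c * d) := by linear_combination h4 - h
  omega

/-- The key arithmetic lemma: every root of `M = e^⊥` has even second coordinate. -/
lemma root_even (r : Fin 5 → ℤ) (he : Bform 7 r eVec = 0) (hq0 : 0 < Qform 7 r)
    (hd : ∀ x : Fin 5 → ℤ, Bform 7 x eVec = 0 → Qform 7 r ∣ 2 * Bform 7 r x) :
    2 ∣ r 1 := by
  obtain ⟨q, hqdef⟩ : ∃ q, Qform 7 r = q := ⟨_, rfl⟩
  rw [hqdef] at hq0 hd
  have hqpoly : q = -7 * r 0 ^ 2 + r 1 ^ 2 + r 2 ^ 2 + r 3 ^ 2 + r 4 ^ 2 := by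
    rw [← hqdef, Qform_apply]
  have hC : 7 * r 0 = 2 * r 1 + r 2 + r 3 + r 4 := by
    rw [Bform_eVec] at he; linarith
  -- specialize the root condition at three vectors of M
  have hg1 : q ∣ 2 * (r 1 - 2 * r 2) := by
    have h := hd ![0, 1, -2, 0, 0] (by rw [Bform_eVec]; simp)
    rwa [show Bform 7 r ![0, 1, -2, 0, 0] = r 1 - 2 * r 2 from by rw [Bform_apply]; simp; ring] at h
  have hg2 : q ∣ 2 * (r 2 - r 3) := by
    have h := hd ![0, 0, 1, -1, 0] (by rw [Bform_eVec]; simp)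
    rwa [show Bform 7 r ![0, 0, 1, -1, 0] = r 2 - r 3 from by rw [Bform_apply]; simp; ring] at h
  have hg3 : q ∣ 2 * (r 3 - r 4) := by
    have h := hd ![0, 0, 0, 1, -1] (by rw [Bform_eVec]; simp)
    rwa [show Bform 7 r ![0, 0, 0, 1, -1] = r 3 - r 4 from by rw [Bform_apply]; simp; ring] at h
  obtain ⟨u1, hu1⟩ := hg1
  obtain ⟨u2, hu2⟩ := hg2
  obtain ⟨u3, hu3⟩ := hg3
  -- adjugate relations
  have h14a : 14 * (r 1 - 2 * r 0) = q * (3 * u1 + 4 * u2 + 2 * u3) := by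
    linear_combination 3 * hu1 + 4 * hu2 + 2 * hu3 - 4 * hC
  have h14b : 14 * (2 * r 0 - r 3 - r 4) = q * (4 * u1 + 10 * u2 + 5 * u3) := by
    linear_combination 4 * hu1 + 10 * hu2 + 5 * hu3 + 4 * hC
  have h14c : 14 * (r 0 - r 4) = q * (2 * u1 + 5 * u2 + 6 * u3) := by
    linear_combination 2 * hu1 + 5 * hu2 + 6 * hu3 + 2 * hC
  -- q divides 28
  have e1 : 28 * (-7 * r 0 ^ 2 + r 1 ^ 2 + r 2 ^ 2 + r 3 ^ 2 + r 4 ^ 2) =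
      (14 * (r 1 - 2 * r 0)) * (2 * (r 1 - 2 * r 2)) +
      (14 * (2 * r 0 - r 3 - r 4)) * (2 * (r 2 - r 3)) +
      (14 * (r 0 - r 4)) * (2 * (r 3 - r 4)) := by
    linear_combination (-28 * (r 0 + r 2)) * hC
  have hsum : q * 28 = q * (q * ((3 * u1 + 4 * u2 + 2 * u3) * u1 +
      (4 * u1 + 10 * u2 + 5 * u3) * u2 + (2 * u1 + 5 * u2 + 6 * u3) * u3)) := by
    calc q * 28 = 28 * (-7 * r 0 ^ 2 + r 1 ^ 2 + r 2 ^ 2 + r 3 ^ 2 + r 4 ^ 2) := by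
          rw [← hqpoly]; ring
    _ = (14 * (r 1 - 2 * r 0)) * (2 * (r 1 - 2 * r 2)) +
        (14 * (2 * r 0 - r 3 - r 4)) * (2 * (r 2 - r 3)) +
        (14 * (r 0 - r 4)) * (2 * (r 3 - r 4)) := e1
    _ = (q * (3 * u1 + 4 * u2 + 2 * u3)) * (q * u1) +
        (q * (4 * u1 + 10 * u2 + 5 * u3)) * (q * u2) +
        (q * (2 * u1 + 5 * u2 + 6 * u3)) * (q * u3) := by
          rw [h14a, h14b, h14c, ← hu1, ← hu2, ← hu3]
    _ = q * (q * ((3 * u1 + 4 * u2 + 2 * u3) * u1 +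
        (4 * u1 + 10 * u2 + 5 * u3) * u2 + (2 * u1 + 5 * u2 + 6 * u3) * u3)) := by ring
  have hK : (28 : ℤ) = q * ((3 * u1 + 4 * u2 + 2 * u3) * u1 +
      (4 * u1 + 10 * u2 + 5 * u3) * u2 + (2 * u1 + 5 * u2 + 6 * u3) * u3) :=
    mul_left_cancel₀ (ne_of_gt hq0) hsum
  have hqle : q ≤ 28 := Int.le_of_dvd (by norm_num) ⟨_, hK⟩
  have hcases : q = 1 ∨ q = 2 ∨ q = 4 ∨ q = 7 ∨ q = 14 ∨ q = 28 := by
    interval_cases q <;> omega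
  -- the four-squares expression for q
  have hpar : q = (r 1 - 2 * r 0) ^ 2 + (r 0 - r 2) ^ 2 + (r 0 - r 3) ^ 2 + (r 0 - r 4) ^ 2 := by
    rw [hqpoly]; linear_combination (-2 * r 0) * hC
  -- rule out q = 1 and q = 7, and do the parity argument otherwise
  rcases hcases with rfl | rfl | rfl | rfl | rfl | rfl
  · -- q = 1 : impossible
    exfalso
    have h2 : 2 * (r 1 - 2 * r 0) = (r 0 - r 2) + (r 0 - r 3) + (r 0 - r 4) := by linarith
    exact four_sq_ne_one _ _ _ _ hpar.symm h2
  · -- q = 2 : parity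
    obtain ⟨p1, hp1⟩ := sq_eq_self_add_two_mul (r 1 - 2 * r 0)
    obtain ⟨p2, hp2⟩ := sq_eq_self_add_two_mul (r 0 - r 2)
    obtain ⟨p3, hp3⟩ := sq_eq_self_add_two_mul (r 0 - r 3)
    obtain ⟨p4, hp4⟩ := sq_eq_self_add_two_mul (r 0 - r 4)
    rw [hp1, hp2, hp3, hp4] at hpar
    clear * - hpar hC
    omega
  · obtain ⟨p1, hp1⟩ := sq_eq_self_add_two_mul (r 1 - 2 * r 0)
    obtain ⟨p2, hp2⟩ := sq_eq_self_add_two_mul (r 0 - r 2)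
    obtain ⟨p3, hp3⟩ := sq_eq_self_add_two_mul (r 0 - r 3)
    obtain ⟨p4, hp4⟩ := sq_eq_self_add_two_mul (r 0 - r 4)
    rw [hp1, hp2, hp3, hp4] at hpar
    clear * - hpar hC
    omega
  · -- q = 7 : impossible
    exfalso
    clear hsum hK e1 h14a h14b h14c hd hqdef hqle he
    have hd1 : (7 : ℤ) ∣ r 1 - 2 * r 2 := by clear * - hu1; omega
    have hd2 : (7 : ℤ) ∣ r 2 - r 3 := by clear * - hu2; omega
    have hd3 : (7 : ℤ) ∣ r 3 - r 4 := by clear * - hu3; omega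
    obtain ⟨s1, hs1⟩ := hd1
    obtain ⟨s2, hs2⟩ := hd2
    obtain ⟨s3, hs3⟩ := hd3
    have ha : r 1 - 2 * r 0 = 3 * s1 + 4 * s2 + 2 * s3 := by clear * - hs1 hs2 hs3 hC; omega
    have hb' : 2 * r 0 - r 3 - r 4 = 4 * s1 + 10 * s2 + 5 * s3 := by clear * - hs1 hs2 hs3 hC; omega
    have hc' : r 0 - r 4 = 2 * s1 + 5 * s2 + 6 * s3 := by clear * - hs1 hs2 hs3 hC; omega
    have h7eq : (7 : ℤ) = (r 1 - 2 * r 0) * (r 1 - 2 * r 2) +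
        (2 * r 0 - r 3 - r 4) * (r 2 - r 3) + (r 0 - r 4) * (r 3 - r 4) := by
      rw [hqpoly]; linear_combination (-(r 0 + r 2)) * hC
    rw [hs1, hs2, hs3, ha, hb', hc'] at h7eq
    have h7' : (7 : ℤ) * 1 = 7 * ((s1 + 2 * s2 + 2 * s3) ^ 2 + 2 * (s1 + s2) ^ 2 +
        (s2 + s3) ^ 2 + 3 * s2 ^ 2 + s3 ^ 2) := by linear_combination h7eq
    have h1 : (1 : ℤ) = (s1 + 2 * s2 + 2 * s3) ^ 2 + 2 * (s1 + s2) ^ 2 +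
        (s2 + s3) ^ 2 + 3 * s2 ^ 2 + s3 ^ 2 :=
      mul_left_cancel₀ (by norm_num : (7 : ℤ) ≠ 0) h7'
    have hs2z : s2 = 0 := by
      by_contra h0
      have := one_le_sq h0
      nlinarith [sq_nonneg (s1 + 2 * s2 + 2 * s3), sq_nonneg (s1 + s2), sq_nonneg (s2 + s3),
        sq_nonneg s3]
    subst hs2z
    have hs3z : s3 = 0 := by
      by_contra h0
      have := one_le_sq h0
      nlinarith [sq_nonneg (s1 + 2 * s3), sq_nonneg s1]
    subst hs3z
    have hs1z : s1 = 0 ∨ 1 ≤ s1 ^ 2 := by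
      rcases eq_or_ne s1 0 with h | h
      · exact Or.inl h
      · exact Or.inr (one_le_sq h)
    rcases hs1z with rfl | h
    · norm_num at h1
    · nlinarith
  · obtain ⟨p1, hp1⟩ := sq_eq_self_add_two_mul (r 1 - 2 * r 0)
    obtain ⟨p2, hp2⟩ := sq_eq_self_add_two_mul (r 0 - r 2)
    obtain ⟨p3, hp3⟩ := sq_eq_self_add_two_mul (r 0 - r 3)
    obtain ⟨p4, hp4⟩ := sq_eq_self_add_two_mul (r 0 - r 4)
    rw [hp1, hp2, hp3, hp4] at hpar
    clear * - hpar hC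
    omega
  · obtain ⟨p1, hp1⟩ := sq_eq_self_add_two_mul (r 1 - 2 * r 0)
    obtain ⟨p2, hp2⟩ := sq_eq_self_add_two_mul (r 0 - r 2)
    obtain ⟨p3, hp3⟩ := sq_eq_self_add_two_mul (r 0 - r 3)
    obtain ⟨p4, hp4⟩ := sq_eq_self_add_two_mul (r 0 - r 4)
    rw [hp1, hp2, hp3, hp4] at hpar
    clear * - hpar hC
    omega

/-- The auxiliary subgroup `{x ∈ M : x 1 even}`. -/
def N7 : AddSubgroup (Fin 5 → ℤ) where
  carrier := {x | Bform 7 x eVec = 0 ∧ 2 ∣ x 1}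
  zero_mem' := by
    constructor
    · rw [Bform_eVec]; simp
    · simp
  add_mem' := by
    rintro a b ⟨ha1, ha2⟩ ⟨hb1, hb2⟩
    rw [Bform_eVec] at ha1 hb1
    constructor
    · rw [Bform_eVec]; simp only [Pi.add_apply]; linarith
    · simp only [Pi.add_apply]; omega
  neg_mem' := by
    rintro a ⟨ha1, ha2⟩
    rw [Bform_eVec] at ha1
    constructor
    · rw [Bform_eVec]; simp only [Pi.neg_apply]; linarith
    · simp only [Pi.neg_apply]; omega

theorem stmt13 :
    Qform 7 eVec = 0 ∧
    ((AddSubgroup.closure (insert eVec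
        {r : Fin 5 → ℤ | Bform 7 r eVec = 0 ∧ 0 < Qform 7 r ∧
          ∀ x : Fin 5 → ℤ, Bform 7 x eVec = 0 → Qform 7 r ∣ 2 * Bform 7 r x}) :
        Set (Fin 5 → ℤ)) ⊂ {x : Fin 5 → ℤ | Bform 7 x eVec = 0}) := by
  constructor
  · rw [Qform_apply]
    norm_num [show eVec 0 = 1 from rfl, show eVec 1 = 2 from rfl, show eVec 2 = 1 from rfl,
      show eVec 3 = 1 from rfl, show eVec 4 = 1 from rfl]
  · have hle : AddSubgroup.closure (insert eVec
        {r : Fin 5 → ℤ | Bform 7 r eVec = 0 ∧ 0 < Qform 7 r ∧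
          ∀ x : Fin 5 → ℤ, Bform 7 x eVec = 0 → Qform 7 r ∣ 2 * Bform 7 r x}) ≤ N7 := by
      rw [AddSubgroup.closure_le]
      rintro x (rfl | ⟨hx1, hx2, hx3⟩)
      · refine ⟨?_, ?_⟩
        · rw [Bform_eVec]
          norm_num [show eVec 0 = 1 from rfl, show eVec 1 = 2 from rfl,
            show eVec 2 = 1 from rfl, show eVec 3 = 1 from rfl, show eVec 4 = 1 from rfl]
        · exact ⟨1, rfl⟩
      · exact ⟨hx1, root_even x hx1 hx2 hx3⟩
    rw [Set.ssubset_def]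
    constructor
    · intro x hx
      exact (hle hx).1
    · intro hcon
      have hw : (![0, 1, -2, 0, 0] : Fin 5 → ℤ) ∈ {x : Fin 5 → ℤ | Bform 7 x eVec = 0} := by
        rw [Set.mem_setOf_eq, Bform_eVec]; simp
      have hmem := hcon hw
      have := (hle hmem).2
      norm_num at this
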